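/- Let (Ω, ℱ, μ) be a probability space with Ω a finite type and all subsets measurable, let T : Ω → Bool be a treatment indicator, let Y : Ω → γ (the pair of potential outcomes), let X : Ω → χ (the covariates), let f : χ → β, and let B = f ∘ X (a balancing function of the covariates). Assume (strong ignorability given X): for every x with μ {X = x} > 0, under the conditioned measure μ[·|{X = x}] the random variables Y and T are independent (IndepFun), and 0 < μ[{T = true} | {X = x}] < 1. Assume (perfect balance): for every b with μ {B = b} > 0, under the conditioned measure μ[·|{B = b}] the random variables X and T are independent. Then the treatment assignment is strongly ignorable within each group defined by B: for every b with μ {B = b} > 0, under μ[·|{B = b}] the random variables Y and T are independent, and 0 < μ[{T = true} | {B = b}] < 1. -/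

import Mathlib

open MeasureTheory ProbabilityTheory

/-- Rosenbaum–Rubin: if treatment assignment is strongly ignorable given the covariates `X`,
and `B = f ∘ X` is a balancing score (within each group `B = b` the covariates `X` and the
treatment `T` are independent), then the treatment assignment is strongly ignorable within
each group defined by `B`. -/
theorem strong_ignorability_within_balanced_groups
    {Ω : Type*} [Fintype Ω] [MeasurableSpace Ω] [MeasurableSingletonClass Ω]
    {γ χ β : Type*} [MeasurableSpace γ] [MeasurableSingletonClass γ]
    [MeasurableSpace χ] [MeasurableSingletonClass χ]
    [MeasurableSpace β] [MeasurableSingletonClass β]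
    (μ : Measure Ω) [IsProbabilityMeasure μ]
    (T : Ω → Bool) (Y : Ω → γ) (X : Ω → χ) (f : χ → β)
    (B : Ω → β) (hB : B = f ∘ X)
    (hsi : ∀ x : χ, 0 < μ {ω | X ω = x} →
      IndepFun Y T (μ[|{ω | X ω = x}]) ∧
      0 < (μ[|{ω | X ω = x}]) {ω | T ω = true} ∧
      (μ[|{ω | X ω = x}]) {ω | T ω = true} < 1)
    (hbal : ∀ b : β, 0 < μ {ω | B ω = b} →
      IndepFun X T (μ[|{ω | B ω = b}])) :
    ∀ b : β, 0 < μ {ω | B ω = b} →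
      IndepFun Y T (μ[|{ω | B ω = b}]) ∧
      0 < (μ[|{ω | B ω = b}]) {ω | T ω = true} ∧
      (μ[|{ω | B ω = b}]) {ω | T ω = true} < 1 := by
  classical
  intro b hb
  have hmeas : ∀ s : Set Ω, MeasurableSet s := fun s => s.toFinite.measurableSet
  set S : Set Ω := {ω | B ω = b} with hSdef
  have hSne : μ S ≠ 0 := hb.ne'
  have hSfin : μ S ≠ ⊤ := measure_ne_top μ S
  have hcond : ∀ t : Set Ω, (μ[|S]) t = (μ S)⁻¹ * μ (S ∩ t) :=
    fun t => cond_apply (hmeas S) μ t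
  have hScancel : μ S * (μ S)⁻¹ = 1 := ENNReal.mul_inv_cancel hSne hSfin
  have hbal' := indepFun_iff_measure_inter_preimage_eq_mul.mp (hbal b hb)
  rw [← hSdef] at hbal' 
  -- the finitely many covariate values in group b
  set Fb : Finset χ := (Finset.univ.image X).filter (fun x => f x = b) with hFb
  have hXsub : ∀ x : χ, f x = b → {ω | X ω = x} ⊆ S := by
    intro x hfx ω hω
    simp only [hSdef, hB, Set.mem_setOf_eq, Function.comp_apply]
    rw [Set.mem_setOf_eq] at hω
    rw [hω, hfx]
  -- decomposition of any event inside S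
  have hsum : ∀ E : Set Ω, μ (S ∩ E) = ∑ x ∈ Fb, μ ({ω | X ω = x} ∩ E) := by
    intro E
    have hun : S ∩ E = ⋃ x ∈ Fb, ({ω | X ω = x} ∩ E) := by
      ext ω
      simp only [Set.mem_iUnion, Set.mem_inter_iff, Set.mem_setOf_eq, exists_prop]
      constructor
      · rintro ⟨hωS, hωE⟩
        refine ⟨X ω, ?_, rfl, hωE⟩
        simp only [hFb, Finset.mem_filter, Finset.mem_image]
        refine ⟨⟨ω, Finset.mem_univ ω, rfl⟩, ?_⟩
        simpa [hSdef, hB] using hωS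
      · rintro ⟨x, hx, hωx, hωE⟩
        exact ⟨hXsub x (Finset.mem_filter.mp hx).2 hωx, hωE⟩
    rw [hun]
    refine measure_biUnion_finset ?_ (fun x _ => hmeas _)
    intro x _ y _ hxy
    refine Set.disjoint_left.mpr ?_
    rintro ω ⟨hωx, -⟩ ⟨hωy, -⟩
    exact hxy (hωx.symm.trans hωy)
  -- Step A: within the group, P(T ∈ C | X = x) = P(T ∈ C | B = b)
  have keyA : ∀ x : χ, f x = b → μ {ω | X ω = x} ≠ 0 → ∀ C : Set Bool,
      (μ[|{ω | X ω = x}]) (T ⁻¹' C) = (μ[|S]) (T ⁻¹' C) := by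
    intro x hfx hx C
    have hxfin : μ {ω | X ω = x} ≠ ⊤ := measure_ne_top _ _
    have hxcancel : (μ {ω | X ω = x})⁻¹ * μ {ω | X ω = x} = 1 :=
      ENNReal.inv_mul_cancel hx hxfin
    have hXx : μ (S ∩ {ω | X ω = x}) = μ {ω | X ω = x} := by
      rw [Set.inter_eq_right.mpr (hXsub x hfx)]
    have hXpre : X ⁻¹' {x} = {ω | X ω = x} := by ext ω; simp
    have hind := hbal' {x} C (measurableSet_singleton x)
      ((Set.to_countable C).measurableSet)
    rw [hXpre] at hind
    -- compute μ ({X = x} ∩ T⁻¹ C)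
    have h1 : μ ({ω | X ω = x} ∩ T ⁻¹' C) = μ {ω | X ω = x} * (μ[|S]) (T ⁻¹' C) := by
      have h2 : μ ({ω | X ω = x} ∩ T ⁻¹' C) = μ (S ∩ ({ω | X ω = x} ∩ T ⁻¹' C)) := by
        rw [Set.inter_eq_right.mpr (((Set.inter_subset_left).trans (hXsub x hfx)))]
      rw [h2]
      have h3 : μ (S ∩ ({ω | X ω = x} ∩ T ⁻¹' C)) = μ S * (μ[|S]) ({ω | X ω = x} ∩ T ⁻¹' C) := by
        rw [hcond, ← mul_assoc, hScancel, one_mul]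
      rw [h3, hind, hcond ({ω | X ω = x}), hXx, ← mul_assoc, ← mul_assoc, hScancel, one_mul]
    rw [cond_apply (hmeas _) μ, h1, ← mul_assoc, hxcancel, one_mul]
  -- Step B: within the group, Y and T are independent
  have keyB : ∀ (A : Set γ) (C : Set Bool), MeasurableSet A →
      (μ[|S]) (Y ⁻¹' A ∩ T ⁻¹' C) = (μ[|S]) (Y ⁻¹' A) * (μ[|S]) (T ⁻¹' C) := by
    intro A C hA
    have hterm : ∀ x ∈ Fb,
        μ ({ω | X ω = x} ∩ (Y ⁻¹' A ∩ T ⁻¹' C))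
          = μ ({ω | X ω = x} ∩ Y ⁻¹' A) * (μ[|S]) (T ⁻¹' C) := by
      intro x hx
      have hfx : f x = b := (Finset.mem_filter.mp hx).2
      by_cases hx0 : μ {ω | X ω = x} = 0
      · have h1 : μ ({ω | X ω = x} ∩ (Y ⁻¹' A ∩ T ⁻¹' C)) = 0 :=
          le_antisymm (le_trans (measure_mono Set.inter_subset_left) hx0.le) zero_le
        have h2 : μ ({ω | X ω = x} ∩ Y ⁻¹' A) = 0 :=
          le_antisymm (le_trans (measure_mono Set.inter_subset_left) hx0.le) zero_le
        rw [h1, h2, zero_mul]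
      · have hxpos : 0 < μ {ω | X ω = x} := pos_iff_ne_zero.mpr hx0
        have hxfin : μ {ω | X ω = x} ≠ ⊤ := measure_ne_top _ _
        have hxcancel : μ {ω | X ω = x} * (μ {ω | X ω = x})⁻¹ = 1 :=
          ENNReal.mul_inv_cancel hx0 hxfin
        obtain ⟨hYT, -, -⟩ := hsi x hxpos
        have hind := (indepFun_iff_measure_inter_preimage_eq_mul.mp hYT) A C
          hA ((Set.to_countable C).measurableSet)
        have hcx : ∀ t : Set Ω, (μ[|{ω | X ω = x}]) t = (μ {ω | X ω = x})⁻¹ * μ ({ω | X ω = x} ∩ t) :=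
          fun t => cond_apply (hmeas _) μ t
        have h4 : μ ({ω | X ω = x} ∩ (Y ⁻¹' A ∩ T ⁻¹' C))
            = μ {ω | X ω = x} * (μ[|{ω | X ω = x}]) (Y ⁻¹' A ∩ T ⁻¹' C) := by
          rw [hcx, ← mul_assoc, hxcancel, one_mul]
        rw [h4, hind, keyA x hfx hx0 C, hcx (Y ⁻¹' A), ← mul_assoc, ← mul_assoc, hxcancel, one_mul]
    calc (μ[|S]) (Y ⁻¹' A ∩ T ⁻¹' C)
        = (μ S)⁻¹ * μ (S ∩ (Y ⁻¹' A ∩ T ⁻¹' C)) := hcond _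
      _ = (μ S)⁻¹ * ∑ x ∈ Fb, μ ({ω | X ω = x} ∩ (Y ⁻¹' A ∩ T ⁻¹' C)) := by rw [hsum]
      _ = (μ S)⁻¹ * ∑ x ∈ Fb, μ ({ω | X ω = x} ∩ Y ⁻¹' A) * (μ[|S]) (T ⁻¹' C) := by
          rw [Finset.sum_congr rfl hterm]
      _ = (μ S)⁻¹ * ((∑ x ∈ Fb, μ ({ω | X ω = x} ∩ Y ⁻¹' A)) * (μ[|S]) (T ⁻¹' C)) := by
          rw [← Finset.sum_mul]
      _ = (μ S)⁻¹ * (μ (S ∩ Y ⁻¹' A) * (μ[|S]) (T ⁻¹' C)) := by rw [← hsum]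
      _ = (μ[|S]) (Y ⁻¹' A) * (μ[|S]) (T ⁻¹' C) := by rw [← mul_assoc, ← hcond]
  -- find a covariate value with positive mass in the group
  have hTset : {ω | T ω = true} = T ⁻¹' {true} := by ext ω; simp
  obtain ⟨x, hxF, hx0⟩ : ∃ x ∈ Fb, μ {ω | X ω = x} ≠ 0 := by
    by_contra h
    push_neg at h
    have : μ S = 0 := by
      have := hsum Set.univ
      simp only [Set.inter_univ] at this
      rw [this, Finset.sum_eq_zero h]
    exact hSne this
  have hfx : f x = b := (Finset.mem_filter.mp hxF).2
  have hxpos : 0 < μ {ω | X ω = x} := pos_iff_ne_zero.mpr hx0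
  obtain ⟨-, hp0, hp1⟩ := hsi x hxpos
  have hTeq : (μ[|S]) {ω | T ω = true} = (μ[|{ω | X ω = x}]) {ω | T ω = true} := by
    rw [hTset, ← keyA x hfx hx0 {true}]
  refine ⟨indepFun_iff_measure_inter_preimage_eq_mul.mpr fun A C hA _ => keyB A C hA, ?_, ?_⟩
  · rw [hTeq]; exact hp0
  · rw [hTeq]; exact hp1
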